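/- Generalized Steinberg theorem for GL(n, F_q), q a power of p: for any standard parabolic subgroup P of K = GL(n, F_q), the number of p-singular elements of P times |O_p(P)| equals |K|_p^2, i.e. |{g ∈ P : order of g is a power of p}| · |O_p(P)| = q^{n(n-1)}. -/

import Mathlib

namespace ParabolicGL

variable (n : ℕ) {F : Type*} [Field F]

/-- Indices `i j` of `Fin n` are separated by a wall of the subset `I` of the `n - 1`
fundamental roots: some `k ∉ I` lies between them. -/
def Separated (I : Finset (Fin (n - 1))) (i j : Fin n) : Prop :=
  ∃ k : Fin (n - 1), k ∉ I ∧ min i.val j.val ≤ k.val ∧ k.val < max i.val j.val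

/-- The standard parabolic subgroup `P_I` of `GL(n, F)`: block upper triangular
matrices for the block decomposition determined by `I`. -/
def P (I : Finset (Fin (n - 1))) : Set (Matrix.GeneralLinearGroup (Fin n) F) :=
  {A | ∀ i j : Fin n, j < i → Separated n I i j →
    (A : Matrix (Fin n) (Fin n) F) i j = 0}

/-- The unipotent radical `U_I = O_p(P_I)` of the standard parabolic `P_I`: block upper
triangular matrices whose diagonal blocks are identity blocks. -/
def U (I : Finset (Fin (n - 1))) : Set (Matrix.GeneralLinearGroup (Fin n) F) :=
  {A | A ∈ P n I ∧ ∀ i j : Fin n, ¬ Separated n I i j →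
    (A : Matrix (Fin n) (Fin n) F) i j = if i = j then 1 else 0}

end ParabolicGL


open Submodule LinearMap Module Polynomial

set_option linter.unusedSectionVars false
set_option maxHeartbeats 1000000


namespace SteinbergAux

variable {F : Type*} [Field F] {V : Type*} [AddCommGroup V] [Module F V]

/-! ### Range stabilization -/

lemma range_pow_succ (f : Module.End F V) (k : ℕ) :
    range (f ^ (k + 1)) = Submodule.map f (range (f ^ k)) := by
  rw [pow_succ', Module.End.mul_eq_comp]
  exact range_comp _ _

lemma range_pow_antitone (f : Module.End F V) (k : ℕ) :
    range (f ^ (k + 1)) ≤ range (f ^ k) := by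
  rintro x ⟨y, rfl⟩
  exact ⟨f y, by rw [pow_succ]; rfl⟩

lemma range_pow_stab_step (f : Module.End F V) {k : ℕ}
    (h : range (f ^ (k + 1)) = range (f ^ k)) (l : ℕ) (hkl : k ≤ l) :
    range (f ^ (l + 1)) = range (f ^ l) := by
  induction l with
  | zero => simpa [Nat.le_zero.mp hkl] using h
  | succ m ih =>
    rcases Nat.lt_or_ge k (m + 1) with hk | hk
    · have := ih (Nat.lt_succ_iff.mp hk)
      rw [range_pow_succ f (m + 1), this, ← range_pow_succ]
      exact this
    · have : k = m + 1 := le_antisymm hkl hk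
      subst this; exact h

variable [FiniteDimensional F V]

lemma exists_range_pow_eq (f : Module.End F V) :
    ∃ k ≤ finrank F V, range (f ^ (k + 1)) = range (f ^ k) := by
  by_contra hcon
  push_neg at hcon
  have key : ∀ k, k ≤ finrank F V + 1 → finrank F (range (f ^ k)) + k ≤ finrank F V := by
    intro k
    induction k with
    | zero => intro _; simpa using (Submodule.finrank_le (range (f ^ 0)))
    | succ m ih =>
      intro hm
      have hm' : m ≤ finrank F V := by omega
      have hlt : range (f ^ (m + 1)) < range (f ^ m) :=
        lt_of_le_of_ne (range_pow_antitone f m) (hcon m hm')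
      have := Submodule.finrank_lt_finrank_of_lt hlt
      have := ih (by omega)
      omega
  have := key (finrank F V + 1) le_rfl
  omega

lemma map_range_pow_finrank (f : Module.End F V) :
    Submodule.map f (range (f ^ finrank F V)) = range (f ^ finrank F V) := by
  obtain ⟨k, hk, heq⟩ := exists_range_pow_eq f
  rw [← range_pow_succ]
  exact range_pow_stab_step f heq _ hk

/-- A nilpotent endomorphism of a finite dimensional space has `f ^ dim = 0`. -/
lemma pow_finrank_eq_zero_of_isNilpotent {f : Module.End F V} (h : IsNilpotent f) :
    f ^ finrank F V = 0 := by
  have h1 : f.charpoly = X ^ finrank F V := h.charpoly_eq_X_pow_finrank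
  have h2 := LinearMap.aeval_self_charpoly f
  rwa [h1, map_pow, aeval_X] at h2


/-! ### Decomposition of an endomorphism relative to a complemented submodule -/

section Tri

variable (A C : Submodule F V) (hC : IsCompl A C)

/-- diagonal part on `A` -/
noncomputable def gPart (f : Module.End F V) : Module.End F A :=
  (A.projectionOnto C hC) ∘ₗ f ∘ₗ A.subtype

/-- diagonal part on `C` -/
noncomputable def hPart (f : Module.End F V) : Module.End F C :=
  (C.projectionOnto A hC.symm) ∘ₗ f ∘ₗ C.subtype

/-- off-diagonal part -/
noncomputable def phiPart (f : Module.End F V) : C →ₗ[F] A :=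
  (A.projectionOnto C hC) ∘ₗ f ∘ₗ C.subtype

/-- reconstruction from triple -/
noncomputable def ofTri (g : Module.End F A) (h : Module.End F C) (φ : C →ₗ[F] A) :
    Module.End F V :=
  A.subtype ∘ₗ g ∘ₗ (A.projectionOnto C hC) +
    A.subtype ∘ₗ φ ∘ₗ (C.projectionOnto A hC.symm) +
    C.subtype ∘ₗ h ∘ₗ (C.projectionOnto A hC.symm)

variable {A C}

lemma proj_add_proj (x : V) :
    (A.projectionOnto C hC x : V) + (C.projectionOnto A hC.symm x : V) = x :=
  Submodule.projection_add_projection_eq_self hC x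

lemma mem_A_iff_projC_eq_zero {x : V} : C.projectionOnto A hC.symm x = 0 ↔ x ∈ A :=
  Submodule.projectionOnto_apply_eq_zero_iff hC.symm

lemma ofTri_apply_coe_A (g : Module.End F A) (h : Module.End F C) (φ : C →ₗ[F] A) (a : A) :
    ofTri A C hC g h φ (a : V) = (g a : V) := by
  simp [ofTri, Submodule.projectionOnto_apply_left,
    Submodule.projectionOnto_apply_right]

lemma ofTri_apply_coe_C (g : Module.End F A) (h : Module.End F C) (φ : C →ₗ[F] A) (c : C) :
    ofTri A C hC g h φ (c : V) = (φ c : V) + (h c : V) := by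
  simp [ofTri, Submodule.projectionOnto_apply_left,
    Submodule.projectionOnto_apply_right]

lemma ofTri_mem_A (g : Module.End F A) (h : Module.End F C) (φ : C →ₗ[F] A) (a : A) :
    ofTri A C hC g h φ (a : V) ∈ A := by
  rw [ofTri_apply_coe_A]; exact (g a).2

lemma gPart_ofTri (g : Module.End F A) (h : Module.End F C) (φ : C →ₗ[F] A) :
    gPart A C hC (ofTri A C hC g h φ) = g := by
  ext a
  show (A.projectionOnto C hC (ofTri A C hC g h φ (a : V)) : V) = (g a : V)
  rw [ofTri_apply_coe_A, Submodule.projectionOnto_apply_left]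

lemma hPart_ofTri (g : Module.End F A) (h : Module.End F C) (φ : C →ₗ[F] A) :
    hPart A C hC (ofTri A C hC g h φ) = h := by
  ext c
  show (C.projectionOnto A hC.symm (ofTri A C hC g h φ (c : V)) : V) = (h c : V)
  rw [ofTri_apply_coe_C]
  simp [Submodule.projectionOnto_apply_left, Submodule.projectionOnto_apply_right]

lemma phiPart_ofTri (g : Module.End F A) (h : Module.End F C) (φ : C →ₗ[F] A) :
    phiPart A C hC (ofTri A C hC g h φ) = φ := by
  ext c
  show (A.projectionOnto C hC (ofTri A C hC g h φ (c : V)) : V) = (φ c : V)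
  rw [ofTri_apply_coe_C]
  simp [Submodule.projectionOnto_apply_left, Submodule.projectionOnto_apply_right]

lemma gPart_apply_coe {f : Module.End F V} (hf : ∀ a : A, f (a : V) ∈ A) (a : A) :
    (gPart A C hC f a : V) = f (a : V) := by
  show (A.projectionOnto C hC (f (a : V)) : V) = f (a : V)
  exact congrArg _ (Submodule.projectionOnto_apply_left hC ⟨f (a : V), hf a⟩)

lemma ofTri_parts {f : Module.End F V} (hf : ∀ a : A, f (a : V) ∈ A) :
    ofTri A C hC (gPart A C hC f) (hPart A C hC f) (phiPart A C hC f) = f := by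
  ext x
  simp only [ofTri, LinearMap.add_apply, LinearMap.coe_comp, Function.comp_apply,
    Submodule.coe_subtype]
  rw [add_assoc, gPart_apply_coe hC hf]
  have h2 : (phiPart A C hC f ((C.projectionOnto A hC.symm) x) : V) +
      (hPart A C hC f ((C.projectionOnto A hC.symm) x) : V) =
      f ((C.projectionOnto A hC.symm x : C) : V) :=
    proj_add_proj hC _
  rw [h2, ← map_add, proj_add_proj hC]

lemma gPart_pow {f : Module.End F V} (hf : ∀ a : A, f (a : V) ∈ A) (k : ℕ) (a : A) :
    ((gPart A C hC f ^ k) a : V) = (f ^ k) (a : V) := by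
  induction k with
  | zero => rfl
  | succ m ih =>
    rw [pow_succ', pow_succ', Module.End.mul_apply, Module.End.mul_apply]
    rw [gPart_apply_coe hC hf, ih]

lemma hPart_pow {f : Module.End F V} (hf : ∀ a : A, f (a : V) ∈ A) (k : ℕ) (x : V) :
    ((hPart A C hC f ^ k) (C.projectionOnto A hC.symm x) : V) =
      (C.projectionOnto A hC.symm ((f ^ k) x) : V) := by
  induction k with
  | zero => rfl
  | succ m ih =>
    rw [pow_succ', pow_succ', Module.End.mul_apply, Module.End.mul_apply]
    have hsplit : (f ^ m) x =
        ((A.projectionOnto C hC ((f ^ m) x)) : V) +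
          ((C.projectionOnto A hC.symm ((f ^ m) x)) : V) := (proj_add_proj hC _).symm
    have congrih : hPart A C hC f ((hPart A C hC f ^ m) (C.projectionOnto A hC.symm x)) =
        hPart A C hC f (C.projectionOnto A hC.symm ((f ^ m) x)) := by
      congr 1; exact Subtype.ext ih
    rw [congrih]
    show (C.projectionOnto A hC.symm (f _) : V) = _
    conv_rhs => rw [hsplit]
    rw [map_add, map_add]
    have h1 : C.projectionOnto A hC.symm (f ((A.projectionOnto C hC ((f ^ m) x)) : V)) = 0 := by
      rw [mem_A_iff_projC_eq_zero hC]
      exact hf _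
    rw [h1, zero_add]
    rfl


/-! ### The two fiber conditions -/

lemma hPart_pow_apply_coe {f : Module.End F V} (hf : ∀ a : A, f (a : V) ∈ A) (k : ℕ) (c : C) :
    ((hPart A C hC f ^ k) c : V) = (C.projectionOnto A hC.symm ((f ^ k) (c : V)) : V) := by
  have := hPart_pow hC hf k (c : V)
  rwa [Submodule.projectionOnto_apply_left hC.symm c] at this

lemma invariant_of_range_pow_eq {f : Module.End F V} (hr : range (f ^ finrank F V) = A)
    (a : A) : f (a : V) ∈ A := by
  have hmap : Submodule.map f A = A := by rw [← hr]; exact map_range_pow_finrank f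
  have : f (a : V) ∈ Submodule.map f A := Submodule.mem_map_of_mem a.2
  rwa [hmap] at this

lemma cond_iff_end {f : Module.End F V} (hf : ∀ a : A, f (a : V) ∈ A) :
    range (f ^ finrank F V) = A ↔
      Function.Bijective (gPart A C hC f) ∧ IsNilpotent (hPart A C hC f) := by
  constructor
  · intro hr
    have hmap : Submodule.map f A = A := by rw [← hr]; exact map_range_pow_finrank f
    have hsurj : Function.Surjective (gPart A C hC f) := by
      intro a
      have : (a : V) ∈ Submodule.map f A := by rw [hmap]; exact a.2
      obtain ⟨x, hxA, hxa⟩ := this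
      refine ⟨⟨x, hxA⟩, Subtype.ext ?_⟩
      rw [gPart_apply_coe hC hf]
      exact hxa
    refine ⟨⟨(LinearMap.injective_iff_surjective).mpr hsurj, hsurj⟩, ⟨finrank F V, ?_⟩⟩
    ext c
    show ((hPart A C hC f ^ finrank F V) c : V) = ((0 : Module.End F C) c : V)
    rw [hPart_pow_apply_coe hC hf]
    have hmem : (f ^ finrank F V) (c : V) ∈ A := by rw [← hr]; exact ⟨c, rfl⟩
    rw [(mem_A_iff_projC_eq_zero hC).mpr hmem]
    rfl
  · rintro ⟨hbij, hnil⟩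
    apply le_antisymm
    · rintro y ⟨x, rfl⟩
      have hC' : hPart A C hC f ^ finrank F V = 0 := by
        have h1 : hPart A C hC f ^ finrank F C = 0 := pow_finrank_eq_zero_of_isNilpotent hnil
        have h2 : finrank F C ≤ finrank F V := C.finrank_le
        calc hPart A C hC f ^ finrank F V
            = hPart A C hC f ^ (finrank F V - finrank F C) * hPart A C hC f ^ finrank F C := by
              rw [← pow_add]; congr 1; omega
          _ = 0 := by rw [h1, mul_zero]
      rw [← mem_A_iff_projC_eq_zero hC]
      have := hPart_pow hC hf (finrank F V) x
      rw [hC'] at this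
      apply Subtype.ext
      rw [← this]
      rfl
    · intro a ha
      have hbd : Function.Bijective ⇑(gPart A C hC f ^ finrank F V) := by
        have hcoe : ⇑(gPart A C hC f ^ finrank F V) = (⇑(gPart A C hC f))^[finrank F V] :=
          funext fun x => Module.End.pow_apply _ _ x
        rw [hcoe]
        exact Function.Bijective.iterate hbij _
      obtain ⟨b, hb⟩ := hbd.2 ⟨a, ha⟩
      refine ⟨(b : V), ?_⟩
      rw [← gPart_pow hC hf, hb]

lemma cond_iff_pair {N : Module.End F V} {v : V} (hf : ∀ a : A, N (a : V) ∈ A) (hv : v ∈ A) :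
    (IsNilpotent N ∧ span F (Set.range fun i : ℕ => (N ^ i) v) = A) ↔
      ((IsNilpotent (gPart A C hC N) ∧
        span F (Set.range fun i : ℕ => ((gPart A C hC N) ^ i) (⟨v, hv⟩ : A)) = ⊤) ∧
        IsNilpotent (hPart A C hC N)) := by
  have hiter : ∀ i : ℕ, (N ^ i) v = (((gPart A C hC N ^ i) (⟨v, hv⟩ : A) : A) : V) := by
    intro i; rw [gPart_pow hC hf]
  have hnil_iff : IsNilpotent N ↔ IsNilpotent (gPart A C hC N) ∧ IsNilpotent (hPart A C hC N) := by
    constructor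
    · rintro ⟨t, ht⟩
      refine ⟨⟨t, ?_⟩, ⟨t, ?_⟩⟩
      · ext a
        show ((gPart A C hC N ^ t) a : V) = ((0 : Module.End F A) a : V)
        rw [gPart_pow hC hf, ht]
        rfl
      · ext c
        show ((hPart A C hC N ^ t) c : V) = ((0 : Module.End F C) c : V)
        rw [hPart_pow_apply_coe hC hf, ht]
        simp
    · rintro ⟨⟨s, hs⟩, ⟨t, ht⟩⟩
      refine ⟨s + t, ?_⟩
      ext x
      have hmem : (N ^ t) x ∈ A := by
        rw [← mem_A_iff_projC_eq_zero hC]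
        apply Subtype.ext
        rw [← hPart_pow hC hf, ht]
        rfl
      have : (N ^ s) ((N ^ t) x) = (((gPart A C hC N ^ s) ⟨(N ^ t) x, hmem⟩ : A) : V) := by
        rw [gPart_pow hC hf]
      rw [pow_add, Module.End.mul_apply, this, hs]
      rfl
  have hspan_iff : span F (Set.range fun i : ℕ => (N ^ i) v) = A ↔
      span F (Set.range fun i : ℕ => ((gPart A C hC N) ^ i) (⟨v, hv⟩ : A)) = ⊤ := by
    have hfun : (fun i : ℕ => (N ^ i) v) =
        (A.subtype ∘ fun i : ℕ => ((gPart A C hC N) ^ i) (⟨v, hv⟩ : A)) :=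
      funext fun i => hiter i
    rw [hfun, Set.range_comp, Submodule.span_image]
    constructor
    · intro h
      apply Submodule.map_injective_of_injective A.injective_subtype
      rw [h, Submodule.map_top, Submodule.range_subtype]
    · intro h
      rw [h, Submodule.map_top, Submodule.range_subtype]
  rw [hnil_iff, hspan_iff]
  tauto


/-! ### Fiber equivalences -/

/-- The fiber of `f ↦ range (f ^ dim)` over `A`. -/
noncomputable def endFiberEquiv :
    {f : Module.End F V // range (f ^ finrank F V) = A} ≃
      ({g : Module.End F A // Function.Bijective g} ×
        ({h : Module.End F C // IsNilpotent h} × (C →ₗ[F] A))) where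
  toFun f :=
    ⟨⟨gPart A C hC f.1,
        ((cond_iff_end hC (invariant_of_range_pow_eq f.2)).mp f.2).1⟩,
      ⟨hPart A C hC f.1, ((cond_iff_end hC (invariant_of_range_pow_eq f.2)).mp f.2).2⟩,
      phiPart A C hC f.1⟩
  invFun t :=
    ⟨ofTri A C hC t.1.1 t.2.1.1 t.2.2, by
      rw [cond_iff_end hC (ofTri_mem_A hC _ _ _), gPart_ofTri, hPart_ofTri]
      exact ⟨t.1.2, t.2.1.2⟩⟩
  left_inv f := Subtype.ext (ofTri_parts hC (invariant_of_range_pow_eq f.2))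
  right_inv t := by
    refine Prod.ext (Subtype.ext ?_) (Prod.ext (Subtype.ext ?_) ?_)
    · exact gPart_ofTri hC _ _ _
    · exact hPart_ofTri hC _ _ _
    · exact phiPart_ofTri hC _ _ _

lemma pair_mem_A {N : Module.End F V} {v : V}
    (hZ : span F (Set.range fun i : ℕ => (N ^ i) v) = A) : v ∈ A := by
  have : v ∈ span F (Set.range fun i : ℕ => (N ^ i) v) := subset_span ⟨0, by simp⟩
  rwa [hZ] at this

lemma pair_invariant {N : Module.End F V} {v : V}
    (hZ : span F (Set.range fun i : ℕ => (N ^ i) v) = A) (a : A) : N (a : V) ∈ A := by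
  have ha' : (a : V) ∈ span F (Set.range fun i : ℕ => (N ^ i) v) := by rw [hZ]; exact a.2
  have hmem : N (a : V) ∈ Submodule.map N (span F (Set.range fun i : ℕ => (N ^ i) v)) :=
    Submodule.mem_map_of_mem ha'
  rw [Submodule.map_span] at hmem
  have hsub : N '' (Set.range fun i : ℕ => (N ^ i) v) ⊆
      ↑(span F (Set.range fun i : ℕ => (N ^ i) v)) := by
    rintro _ ⟨_, ⟨i, rfl⟩, rfl⟩
    exact subset_span ⟨i + 1, by show (N ^ (i+1)) v = N ((N ^ i) v); rw [pow_succ', Module.End.mul_apply]⟩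
  have := (Submodule.span_le.mpr hsub) hmem
  rwa [hZ] at this

/-- The fiber of `(N, v) ↦ span of iterates` over `A`. -/
noncomputable def pairFiberEquiv :
    {x : {N : Module.End F V // IsNilpotent N} × V //
        span F (Set.range fun i : ℕ => ((x.1 : Module.End F V) ^ i) x.2) = A} ≃
      ({av : Module.End F A × A //
          IsNilpotent av.1 ∧ span F (Set.range fun i : ℕ => (av.1 ^ i) av.2) = ⊤} ×
        ({h : Module.End F C // IsNilpotent h} × (C →ₗ[F] A))) where
  toFun x :=
    ⟨⟨(gPart A C hC x.1.1.1, ⟨x.1.2, pair_mem_A x.2⟩),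
        ((cond_iff_pair hC (pair_invariant x.2) (pair_mem_A x.2)).mp
          ⟨x.1.1.2, x.2⟩).1⟩,
      ⟨⟨hPart A C hC x.1.1.1,
        ((cond_iff_pair hC (pair_invariant x.2) (pair_mem_A x.2)).mp
          ⟨x.1.1.2, x.2⟩).2⟩,
      phiPart A C hC x.1.1.1⟩⟩
  invFun t :=
    have hpair := (cond_iff_pair hC (N := ofTri A C hC t.1.1.1 t.2.1.1 t.2.2)
      (v := (t.1.1.2 : V)) (ofTri_mem_A hC _ _ _) t.1.1.2.2).mpr
      (by rw [gPart_ofTri, hPart_ofTri]; exact ⟨⟨t.1.2.1, t.1.2.2⟩, t.2.1.2⟩)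
    ⟨⟨⟨ofTri A C hC t.1.1.1 t.2.1.1 t.2.2, hpair.1⟩, (t.1.1.2 : V)⟩, hpair.2⟩
  left_inv x := by
    refine Subtype.ext (Prod.ext (Subtype.ext ?_) ?_)
    · exact ofTri_parts hC (pair_invariant x.2)
    · rfl
  right_inv t := by
    refine Prod.ext (Subtype.ext (Prod.ext ?_ ?_)) (Prod.ext (Subtype.ext ?_) ?_)
    · exact gPart_ofTri hC _ _ _
    · rfl
    · exact hPart_ofTri hC _ _ _
    · exact phiPart_ofTri hC _ _ _

end Tri


/-! ### Cyclic nilpotent pairs, families, automorphisms -/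

section Cyc

variable (W : Type*) [AddCommGroup W] [Module F W] [FiniteDimensional F W]

/-- bijective endomorphisms correspond to basis families -/
noncomputable def famEquivBij :
    {g : Module.End F W // Function.Bijective g} ≃
      {b : Fin (finrank F W) → W //
        LinearIndependent F b ∧ span F (Set.range b) = ⊤} where
  toFun g :=
    ⟨⇑g.1 ∘ ⇑(Module.finBasis F W), by
      refine ⟨(Module.finBasis F W).linearIndependent.map' g.1
        (LinearMap.ker_eq_bot.mpr g.2.1), ?_⟩
      rw [Set.range_comp, Submodule.span_image, Basis.span_eq, Submodule.map_top,
        LinearMap.range_eq_top]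
      exact g.2.2⟩
  invFun b :=
    ⟨(Module.finBasis F W).constr F b.1, by
      have hBb : ((Module.finBasis F W).constr F b.1) =
          ((Module.finBasis F W).equiv (Basis.mk b.2.1 b.2.2.ge) (Equiv.refl _) :
            W →ₗ[F] W) := by
        apply (Module.finBasis F W).ext
        intro i
        rw [Basis.constr_basis]
        simp [Basis.equiv_apply]
      rw [hBb]
      exact LinearEquiv.bijective _⟩
  left_inv g := by
    refine Subtype.ext ((Module.finBasis F W).ext fun i => ?_)
    rw [Basis.constr_basis]
    rfl
  right_inv b := by
    refine Subtype.ext (funext fun i => ?_)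
    exact Basis.constr_basis _ _ _ _

variable {W}

lemma iter_zero_of_ge (a : Module.End F W) (v : W) {s : ℕ} (hs : (a ^ s) v = 0)
    {k : ℕ} (hk : s ≤ k) : (a ^ k) v = 0 := by
  have : a ^ k = a ^ (k - s) * a ^ s := by rw [← pow_add]; congr 1; omega
  rw [this, Module.End.mul_apply, hs, map_zero]

lemma iter_independent (a : Module.End F W) (v : W) {s : ℕ} (hs : (a ^ s) v = 0)
    (hlt : ∀ i < s, (a ^ i) v ≠ 0) :
    LinearIndependent F (fun i : Fin s => (a ^ (i : ℕ)) v) := by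
  classical
  rw [Fintype.linearIndependent_iff]
  intro g hg
  by_contra hcon
  push_neg at hcon
  obtain ⟨i₀, hi₀⟩ := hcon
  -- take minimal index with nonzero coefficient
  have hne : (Finset.univ.filter fun i => g i ≠ 0).Nonempty := ⟨i₀, by simp [hi₀]⟩
  obtain hmem := Finset.min'_mem _ hne
  set i₁ : Fin s := (Finset.univ.filter fun i => g i ≠ 0).min' hne with hi₁def
  rw [Finset.mem_filter] at hmem
  have hi₁ : g i₁ ≠ 0 := hmem.2
  have hmin : ∀ j, g j ≠ 0 → (i₁ : ℕ) ≤ (j : ℕ) := by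
    intro j hj
    have h := Finset.min'_le (Finset.univ.filter fun i => g i ≠ 0) j (by simp [hj])
    exact h
  have hs0 : 0 < s := i₁.pos
  -- apply a ^ (s - 1 - i₁)
  have happ : (a ^ (s - 1 - (i₁ : ℕ))) (∑ i, g i • (a ^ (i : ℕ)) v) = 0 := by
    rw [hg, map_zero]
  rw [map_sum] at happ
  have hterm : ∀ i : Fin s, (a ^ (s - 1 - (i₁ : ℕ))) (g i • (a ^ (i : ℕ)) v) =
      g i • (a ^ (s - 1 - (i₁ : ℕ) + (i : ℕ))) v := by
    intro i
    rw [map_smul, ← Module.End.mul_apply, ← pow_add]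
  rw [Finset.sum_congr rfl fun i _ => hterm i] at happ
  have hvanish : ∀ i : Fin s, i ≠ i₁ → g i • (a ^ (s - 1 - (i₁ : ℕ) + (i : ℕ))) v = 0 := by
    intro i hi
    by_cases hgi : g i = 0
    · rw [hgi, zero_smul]
    · have hgt : (i₁ : ℕ) < (i : ℕ) := by
        rcases lt_or_eq_of_le (hmin i hgi) with h | h
        · exact h
        · exact absurd (Fin.ext h) (Ne.symm hi)
      have : s ≤ s - 1 - (i₁ : ℕ) + (i : ℕ) := by
        have := i.2
        have := i₁.2
        omega
      rw [iter_zero_of_ge a v hs this, smul_zero]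
  rw [Finset.sum_eq_single i₁ (fun i _ hi => hvanish i hi) (by simp)] at happ
  have hexp : s - 1 - (i₁ : ℕ) + (i₁ : ℕ) = s - 1 := by
    have := i₁.2; omega
  rw [hexp] at happ
  have := hlt (s - 1) (by omega)
  rcases smul_eq_zero.mp happ with h | h
  · exact hi₁ h
  · exact this h

lemma span_iter_fin (a : Module.End F W) (v : W) {s : ℕ} (hs : (a ^ s) v = 0) :
    span F (Set.range fun i : Fin s => (a ^ (i : ℕ)) v) =
      span F (Set.range fun i : ℕ => (a ^ i) v) := by
  apply le_antisymm
  · apply Submodule.span_mono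
    rintro _ ⟨i, rfl⟩
    exact ⟨(i : ℕ), rfl⟩
  · rw [Submodule.span_le]
    rintro _ ⟨i, rfl⟩
    by_cases hi : i < s
    · exact subset_span ⟨⟨i, hi⟩, rfl⟩
    · show (a ^ i) v ∈ _
      rw [iter_zero_of_ge a v hs (by omega)]
      exact Submodule.zero_mem _

section Shift

variable (b : Fin (finrank F W) → W)

lemma shift_basis_ind (hb1 : LinearIndependent F b) : LinearIndependent F b := hb1
lemma shift_basis_span (hb2 : span F (Set.range b) = ⊤) : ⊤ ≤ span F (Set.range b) := hb2.ge

variable (hb1 : LinearIndependent F b) (hb2 : span F (Set.range b) = ⊤)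

/-- The shift endomorphism associated to a basis family. -/
noncomputable def shiftEnd : Module.End F W :=
  (Basis.mk hb1 hb2.ge).constr F
    (fun i => if h : (i : ℕ) + 1 < finrank F W then b ⟨(i : ℕ) + 1, h⟩ else 0)

lemma shiftEnd_def : shiftEnd b hb1 hb2 = (Basis.mk hb1 hb2.ge).constr F
    (fun i => if h : (i : ℕ) + 1 < finrank F W then b ⟨(i : ℕ) + 1, h⟩ else 0) := rfl

lemma shiftEnd_apply (i : Fin (finrank F W)) :
    shiftEnd b hb1 hb2 (b i) =
      if h : (i : ℕ) + 1 < finrank F W then b ⟨(i : ℕ) + 1, h⟩ else 0 := by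
  have hbi : b i = (Basis.mk hb1 hb2.ge) i := by rw [Basis.coe_mk]
  rw [hbi, shiftEnd_def, Basis.constr_basis]

lemma shiftEnd_pow (k : ℕ) (i : Fin (finrank F W)) :
    ((shiftEnd b hb1 hb2) ^ k) (b i) =
      if h : (i : ℕ) + k < finrank F W then b ⟨(i : ℕ) + k, h⟩ else 0 := by
  induction k generalizing i with
  | zero =>
    have h0 : (i : ℕ) + 0 < finrank F W := by simpa using i.2
    rw [dif_pos h0]
    have heq : (⟨(i : ℕ) + 0, h0⟩ : Fin (finrank F W)) = i := Fin.ext (by simp)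
    rw [heq, pow_zero]
    rfl
  | succ m ih =>
    rw [pow_succ, Module.End.mul_apply, shiftEnd_apply]
    by_cases h1 : (i : ℕ) + 1 < finrank F W
    · rw [dif_pos h1, ih ⟨(i : ℕ) + 1, h1⟩]
      have hval : ((⟨(i : ℕ) + 1, h1⟩ : Fin (finrank F W)) : ℕ) = (i : ℕ) + 1 := rfl
      simp only [hval]
      rw [show (i : ℕ) + 1 + m = (i : ℕ) + (m + 1) by omega]
    · rw [dif_neg h1, map_zero, dif_neg (by omega)]

lemma shiftEnd_nilpotent : IsNilpotent (shiftEnd b hb1 hb2) := by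
  refine ⟨finrank F W, ?_⟩
  apply (Basis.mk hb1 hb2.ge).ext
  intro i
  have : (Basis.mk hb1 hb2.ge) i = b i := by rw [Basis.coe_mk]
  rw [this]
  rw [shiftEnd_pow, dif_neg (by omega)]
  rfl

lemma shiftEnd_span :
    span F (Set.range fun i : ℕ =>
      ((shiftEnd b hb1 hb2) ^ i)
        (if h : 0 < finrank F W then b ⟨0, h⟩ else 0)) = ⊤ := by
  by_cases hd : 0 < finrank F W
  · apply le_antisymm le_top
    rw [← hb2, Submodule.span_le]
    rintro _ ⟨i, rfl⟩
    apply subset_span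
    refine ⟨(i : ℕ), ?_⟩
    show ((shiftEnd b hb1 hb2) ^ ((i : ℕ)))
        (if h : 0 < finrank F W then b ⟨0, h⟩ else 0) = b i
    rw [dif_pos hd, shiftEnd_pow,
      dif_pos (show ((⟨0, hd⟩ : Fin (finrank F W)) : ℕ) + (i : ℕ) < finrank F W from by
        show 0 + (i : ℕ) < finrank F W; simpa using i.2)]
    exact congrArg b (Fin.ext (by simp))
  · have : Subsingleton W := (finrank_zero_iff (R := F)).mp (by omega)
    apply le_antisymm le_top
    intro x _
    rw [Subsingleton.elim x 0]
    exact Submodule.zero_mem _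

end Shift

lemma cyc_mem {a : Module.End F W} {v : W} (hnil : IsNilpotent a)
    (hspan : span F (Set.range fun i : ℕ => (a ^ i) v) = ⊤) :
    LinearIndependent F (fun i : Fin (finrank F W) => (a ^ (i : ℕ)) v) ∧
      span F (Set.range fun i : Fin (finrank F W) => (a ^ (i : ℕ)) v) = ⊤ := by
  classical
  have hex : ∃ k, (a ^ k) v = 0 := by
    obtain ⟨t, ht⟩ := hnil
    exact ⟨t, by rw [ht]; rfl⟩
  have hs := Nat.find_spec hex
  have hlt : ∀ i < Nat.find hex, (a ^ i) v ≠ 0 := fun i hi => Nat.find_min hex hi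
  have hind := iter_independent a v hs hlt
  have hsp : span F (Set.range fun i : Fin (Nat.find hex) => (a ^ (i : ℕ)) v) = ⊤ := by
    rw [span_iter_fin a v hs]; exact hspan
  have hsd : Nat.find hex = finrank F W := by
    have := finrank_eq_card_basis (Basis.mk hind hsp.ge)
    simp [Fintype.card_fin] at this
    omega
  have hcomp : (fun i : Fin (Nat.find hex) => (a ^ (i : ℕ)) v) ∘ ⇑(finCongr hsd.symm) =
      (fun i : Fin (finrank F W) => (a ^ (i : ℕ)) v) := by
    funext i; rfl
  constructor
  · exact (linearIndependent_equiv' (finCongr hsd.symm) hcomp).mpr hind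
  · rw [← hcomp, Set.range_comp, Equiv.range_eq_univ, Set.image_univ]
    exact hsp

lemma pow_finrank_vec_eq_zero {a : Module.End F W} {v : W} (hnil : IsNilpotent a)
    (hspan : span F (Set.range fun i : ℕ => (a ^ i) v) = ⊤) :
    (a ^ finrank F W) v = 0 := by
  classical
  have hex : ∃ k, (a ^ k) v = 0 := by
    obtain ⟨t, ht⟩ := hnil
    exact ⟨t, by rw [ht]; rfl⟩
  have hs := Nat.find_spec hex
  have hlt : ∀ i < Nat.find hex, (a ^ i) v ≠ 0 := fun i hi => Nat.find_min hex hi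
  have hind := iter_independent a v hs hlt
  have hsp : span F (Set.range fun i : Fin (Nat.find hex) => (a ^ (i : ℕ)) v) = ⊤ := by
    rw [span_iter_fin a v hs]; exact hspan
  have hsd : Nat.find hex = finrank F W := by
    have := finrank_eq_card_basis (Basis.mk hind hsp.ge)
    simp [Fintype.card_fin] at this
    omega
  rw [← hsd]
  exact hs

/-- key: cyclic nilpotent pairs correspond to basis families. -/
noncomputable def cbEquivFam :
    {av : Module.End F W × W //
        IsNilpotent av.1 ∧ span F (Set.range fun i : ℕ => (av.1 ^ i) av.2) = ⊤} ≃
      {b : Fin (finrank F W) → W //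
        LinearIndependent F b ∧ span F (Set.range b) = ⊤} where
  toFun av := ⟨fun i : Fin (finrank F W) => (av.1.1 ^ (i : ℕ)) av.1.2,
    cyc_mem av.2.1 av.2.2⟩
  invFun b :=
    ⟨(shiftEnd b.1 b.2.1 b.2.2,
        if h : 0 < finrank F W then b.1 ⟨0, h⟩ else 0),
      shiftEnd_nilpotent b.1 b.2.1 b.2.2,
      shiftEnd_span b.1 b.2.1 b.2.2⟩
  left_inv av := by
    obtain ⟨⟨a, v⟩, ⟨hnil, hspan⟩⟩ := av
    dsimp only at hnil hspan ⊢
    have hdv : (a ^ finrank F W) v = 0 := pow_finrank_vec_eq_zero hnil hspan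
    have hmem := cyc_mem hnil hspan
    refine Subtype.ext (Prod.ext ?_ ?_)
    · -- endomorphism component
      apply (Basis.mk hmem.1 hmem.2.ge).ext
      intro i
      have hbi : (Basis.mk hmem.1 hmem.2.ge) i
          = (fun j : Fin (finrank F W) => (a ^ (j : ℕ)) v) i := congrFun (Basis.coe_mk _ _) i
      rw [hbi, shiftEnd_apply]
      by_cases h1 : (i : ℕ) + 1 < finrank F W
      · rw [dif_pos h1]
        show (a ^ ((i : ℕ) + 1)) v = a ((a ^ (i : ℕ)) v)
        rw [pow_succ', Module.End.mul_apply]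
      · rw [dif_neg h1]
        have hieq : (i : ℕ) + 1 = finrank F W := by have := i.2; omega
        show (0 : W) = a ((a ^ (i : ℕ)) v)
        rw [← Module.End.mul_apply, ← pow_succ', hieq]
        exact hdv.symm
    · -- vector component
      show (if h : 0 < finrank F W then (a ^ ((⟨0, h⟩ : Fin (finrank F W)) : ℕ)) v else 0) = v
      by_cases hd : 0 < finrank F W
      · rw [dif_pos hd, pow_zero]
        rfl
      · rw [dif_neg hd]
        have : Subsingleton W := (finrank_zero_iff (R := F)).mp (by omega)
        exact Subsingleton.elim _ _
  right_inv b := by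
    refine Subtype.ext (funext fun i => ?_)
    show ((shiftEnd b.1 b.2.1 b.2.2) ^ (i : ℕ))
        (if h : 0 < finrank F W then b.1 ⟨0, h⟩ else 0) = b.1 i
    rw [dif_pos i.pos, shiftEnd_pow,
      dif_pos (show ((⟨0, i.pos⟩ : Fin (finrank F W)) : ℕ) + (i : ℕ) < finrank F W from by
        show 0 + (i : ℕ) < finrank F W; simpa using i.2)]
    exact congrArg b.1 (Fin.ext (by simp))

end Cyc

/-! ### The count of nilpotent endomorphisms -/

theorem card_nilpotent_end_mul (V : Type*) [AddCommGroup V] [Module F V]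
    [FiniteDimensional F V] :
    Nat.card {N : Module.End F V // IsNilpotent N} * Nat.card V =
      Nat.card (Module.End F V) := by
  classical
  have e_left : Module.End F V ≃
      Σ A : Submodule F V, {f : Module.End F V // range (f ^ finrank F V) = A} :=
    (Equiv.sigmaFiberEquiv fun f : Module.End F V => range (f ^ finrank F V)).symm
  have e_right : ({N : Module.End F V // IsNilpotent N} × V) ≃
      Σ A : Submodule F V, {x : {N : Module.End F V // IsNilpotent N} × V //
        span F (Set.range fun i : ℕ => ((x.1 : Module.End F V) ^ i) x.2) = A} :=
    (Equiv.sigmaFiberEquiv fun x : {N : Module.End F V // IsNilpotent N} × V =>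
      span F (Set.range fun i : ℕ => ((x.1 : Module.End F V) ^ i) x.2)).symm
  let e_fiber : ∀ A : Submodule F V,
      {f : Module.End F V // range (f ^ finrank F V) = A} ≃
        {x : {N : Module.End F V // IsNilpotent N} × V //
          span F (Set.range fun i : ℕ => ((x.1 : Module.End F V) ^ i) x.2) = A} :=
    fun A =>
      (endFiberEquiv (Submodule.exists_isCompl A).choose_spec).trans
        ((Equiv.prodCongr ((famEquivBij (W := A)).trans (cbEquivFam (W := A)).symm)
          (Equiv.refl _)).trans
          (pairFiberEquiv (Submodule.exists_isCompl A).choose_spec).symm)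
  have := Nat.card_congr (e_left.trans ((Equiv.sigmaCongrRight e_fiber).trans e_right.symm))
  rw [this, Nat.card_prod]

theorem card_nilpotent_matrix (ι : Type*) [Fintype ι] [DecidableEq ι] [Finite F] :
    Nat.card {M : Matrix ι ι F // IsNilpotent M} * (Nat.card F) ^ (Fintype.card ι) =
      (Nat.card F) ^ (Fintype.card ι * Fintype.card ι) := by
  classical
  let halg : Matrix ι ι F ≃ₐ[F] Module.End F (ι → F) := Matrix.toLinAlgEquiv'
  have hnil_iff : ∀ M : Matrix ι ι F, IsNilpotent M ↔ IsNilpotent (halg.toEquiv M) := by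
    intro M
    constructor
    · rintro ⟨k, hk⟩
      exact ⟨k, by show (halg M) ^ k = 0; rw [← map_pow, hk, map_zero]⟩
    · rintro ⟨k, hk⟩
      refine ⟨k, halg.injective ?_⟩
      rw [map_pow, map_zero]
      exact hk
  have e : {M : Matrix ι ι F // IsNilpotent M} ≃
      {N : Module.End F (ι → F) // IsNilpotent N} :=
    Equiv.subtypeEquiv halg.toEquiv hnil_iff
  have hV : Nat.card (ι → F) = (Nat.card F) ^ (Fintype.card ι) := by
    rw [Nat.card_fun, Nat.card_eq_fintype_card (α := ι)]
  have hEnd : Nat.card (Module.End F (ι → F)) =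
      (Nat.card F) ^ (Fintype.card ι * Fintype.card ι) := by
    rw [← Nat.card_congr halg.toEquiv]
    have : Nat.card (Matrix ι ι F) = Nat.card (ι → ι → F) := rfl
    rw [this, Nat.card_fun, hV, Nat.card_eq_fintype_card (α := ι), ← pow_mul]
  calc Nat.card {M : Matrix ι ι F // IsNilpotent M} * (Nat.card F) ^ (Fintype.card ι)
      = Nat.card {N : Module.End F (ι → F) // IsNilpotent N} * Nat.card (ι → F) := by
        rw [Nat.card_congr e, hV]
    _ = Nat.card (Module.End F (ι → F)) := card_nilpotent_end_mul (ι → F)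
    _ = (Nat.card F) ^ (Fintype.card ι * Fintype.card ι) := hEnd


/-! ### Block triangular nilpotency -/

section Block

variable {ι : Type*} [Fintype ι] [DecidableEq ι]

lemma isNilpotent_iff_charpoly_eq (M : Matrix ι ι F) :
    IsNilpotent M ↔ M.charpoly = X ^ (Fintype.card ι) := by
  constructor
  · intro h
    have h2 := Matrix.isNilpotent_charpoly_sub_pow_of_isNilpotent h
    have h3 := h2.eq_zero
    rwa [sub_eq_zero] at h3
  · intro h
    refine ⟨Fintype.card ι, ?_⟩
    have haev := M.aeval_self_charpoly
    rwa [h, map_pow, aeval_X] at haev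

lemma monic_dvd_X_pow {P : F[X]} (hm : P.Monic) {K : ℕ} (h : P ∣ X ^ K) :
    P = X ^ P.natDegree := by
  obtain ⟨i, _, hassoc⟩ := (dvd_prime_pow Polynomial.prime_X K).mp h
  have hP : P = X ^ i :=
    Polynomial.eq_of_monic_of_associated hm (monic_X_pow i) hassoc
  rw [hP, natDegree_X_pow]

lemma sum_card_fibers (b : ι → ℕ) :
    ∑ a ∈ Finset.image b Finset.univ, Fintype.card {i // b i = a} = Fintype.card ι := by
  have h := Finset.card_eq_sum_card_fiberwise
    (f := b) (s := Finset.univ) (t := Finset.image b Finset.univ)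
    (fun x _ => Finset.mem_image_of_mem b (Finset.mem_univ x))
  rw [← Finset.card_univ, h]
  refine Finset.sum_congr rfl fun a _ => ?_
  rw [Fintype.card_subtype]

lemma blockTriangular_isNilpotent_iff {b : ι → ℕ} {M : Matrix ι ι F}
    (hM : M.BlockTriangular b) :
    IsNilpotent M ↔
      ∀ a ∈ Finset.image b Finset.univ, IsNilpotent (M.toSquareBlock b a) := by
  constructor
  · intro h a ha
    rw [isNilpotent_iff_charpoly_eq]
    rw [isNilpotent_iff_charpoly_eq] at h
    have hdvd : (M.toSquareBlock b a).charpoly ∣ X ^ (Fintype.card ι) := by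
      rw [← h, hM.charpoly]
      exact Finset.dvd_prod_of_mem _ ha
    have hP := monic_dvd_X_pow (Matrix.charpoly_monic _) hdvd
    rw [hP, Matrix.charpoly_natDegree_eq_dim]
  · intro h
    rw [isNilpotent_iff_charpoly_eq, hM.charpoly]
    rw [Finset.prod_congr rfl (fun a ha => (isNilpotent_iff_charpoly_eq _).mp (h a ha)),
      Finset.prod_pow_eq_pow_sum, sum_card_fibers]

end Block

end SteinbergAux

/-! ### Wall counting and the parabolic structure -/

namespace SteinbergAux

open ParabolicGL

variable (n : ℕ) (I : Finset (Fin (n - 1)))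

/-- number of walls (non-roots) strictly below `i` -/
def wallCount (i : Fin n) : ℕ :=
  (Finset.univ.filter (fun k : Fin (n - 1) => k ∉ I ∧ (k : ℕ) < (i : ℕ))).card

lemma wallCount_mono {i j : Fin n} (hij : (i : ℕ) ≤ (j : ℕ)) :
    wallCount n I i ≤ wallCount n I j := by
  apply Finset.card_le_card
  intro k hk
  rw [Finset.mem_filter] at *
  exact ⟨hk.1, hk.2.1, by omega⟩

lemma separated_iff (i j : Fin n) :
    Separated n I i j ↔ wallCount n I i ≠ wallCount n I j := by
  constructor
  · rintro ⟨k, hkI, hmin, hmax⟩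
    have key : ∀ a b : Fin n, (a : ℕ) ≤ (k : ℕ) → (k : ℕ) < (b : ℕ) →
        wallCount n I a < wallCount n I b := by
      intro a b hak hkb
      apply Finset.card_lt_card
      constructor
      · intro x hx
        rw [Finset.mem_filter] at *
        exact ⟨hx.1, hx.2.1, by omega⟩
      · intro hsub
        have hk2 := hsub (Finset.mem_filter.mpr ⟨Finset.mem_univ k, hkI, by omega⟩)
        rw [Finset.mem_filter] at hk2
        omega
    rcases le_total (i : ℕ) (j : ℕ) with h | h
    · rw [min_eq_left h] at hmin
      rw [max_eq_right h] at hmax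
      exact (key i j hmin hmax).ne
    · rw [min_eq_right h] at hmin
      rw [max_eq_left h] at hmax
      exact (key j i hmin hmax).ne'
  · intro hne
    by_contra hsep
    apply hne
    have hiff : ∀ k : Fin (n - 1), k ∉ I → ((k : ℕ) < (i : ℕ) ↔ (k : ℕ) < (j : ℕ)) := by
      intro k hk
      have hnb : ¬ (min (i : ℕ) (j : ℕ) ≤ (k : ℕ) ∧ (k : ℕ) < max (i : ℕ) (j : ℕ)) := by
        intro hc
        exact hsep ⟨k, hk, hc.1, hc.2⟩
      rcases le_total (i : ℕ) (j : ℕ) with h | h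
      · rw [min_eq_left h, max_eq_right h] at hnb; omega
      · rw [min_eq_right h, max_eq_left h] at hnb; omega
    unfold wallCount
    congr 1
    ext k
    simp only [Finset.mem_filter, Finset.mem_univ, true_and]
    constructor
    · rintro ⟨h1, h2⟩; exact ⟨h1, (hiff k h1).mp h2⟩
    · rintro ⟨h1, h2⟩; exact ⟨h1, (hiff k h1).mpr h2⟩

lemma not_separated_iff (i j : Fin n) :
    ¬ Separated n I i j ↔ wallCount n I i = wallCount n I j := by
  rw [separated_iff]; tauto

variable {Fq : Type*} [Field Fq]

lemma mem_P_iff (g : Matrix.GeneralLinearGroup (Fin n) Fq) :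
    g ∈ P n I ↔ Matrix.BlockTriangular (g : Matrix (Fin n) (Fin n) Fq) (wallCount n I) := by
  constructor
  · intro hg i j hlt
    have hneq : wallCount n I i ≠ wallCount n I j := hlt.ne'
    have hji : j < i := by
      rcases lt_trichotomy j i with h | h | h
      · exact h
      · exact absurd (congrArg (wallCount n I) h) hneq.symm
      · exact absurd (wallCount_mono n I h.le) (by omega)
    exact hg i j hji ((separated_iff n I i j).mpr hneq)
  · intro hg i j hji hsep
    rw [separated_iff] at hsep
    have hle : wallCount n I j ≤ wallCount n I i := wallCount_mono n I hji.le
    exact hg (lt_of_le_of_ne hle (Ne.symm hsep))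

end SteinbergAux

namespace SteinbergAux

open ParabolicGL

variable (n : ℕ) (I : Finset (Fin (n - 1)))
variable {Fq : Type*} [Field Fq]

lemma pSingular_iff {p : ℕ} [hp : Fact p.Prime] [CharP Fq p]
    (g : Matrix.GeneralLinearGroup (Fin n) Fq) :
    (∃ k : ℕ, orderOf g = p ^ k) ↔
      IsNilpotent ((g : Matrix (Fin n) (Fin n) Fq) - 1) := by
  by_cases hn : Nonempty (Fin n)
  swap
  · haveI : IsEmpty (Fin n) := not_nonempty_iff.mp hn
    haveI : Subsingleton (Matrix (Fin n) (Fin n) Fq) :=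
      ⟨fun a b => Matrix.ext fun i _ => isEmptyElim i⟩
    constructor
    · intro _
      exact ⟨1, Subsingleton.elim _ _⟩
    · intro _
      refine ⟨0, ?_⟩
      have hg1 : g = 1 := Units.ext (Subsingleton.elim _ _)
      rw [hg1, orderOf_one, pow_zero]
  haveI := hn
  constructor
  · rintro ⟨k, hk⟩
    have h1 : g ^ p ^ k = 1 := by rw [← hk]; exact pow_orderOf_eq_one g
    refine ⟨p ^ k, ?_⟩
    have hmat : (g : Matrix (Fin n) (Fin n) Fq) ^ p ^ k = 1 := by
      rw [← Units.val_pow_eq_pow_val, h1, Units.val_one]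
    rw [sub_pow_char_pow_of_commute p k (Commute.one_right _), hmat, one_pow, sub_self]
  · rintro ⟨N, hN⟩
    have hle : N ≤ p ^ N := (Nat.lt_pow_self (n := N) hp.out.one_lt).le
    have h0 : ((g : Matrix (Fin n) (Fin n) Fq) - 1) ^ p ^ N = 0 := by
      calc ((g : Matrix (Fin n) (Fin n) Fq) - 1) ^ p ^ N
          = ((g : Matrix (Fin n) (Fin n) Fq) - 1) ^ N *
            ((g : Matrix (Fin n) (Fin n) Fq) - 1) ^ (p ^ N - N) := by
            rw [← pow_add]; congr 1; omega
        _ = 0 := by rw [hN, zero_mul]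
    rw [sub_pow_char_pow_of_commute p N (Commute.one_right _), one_pow, sub_eq_zero] at h0
    have hg : g ^ p ^ N = 1 := Units.ext (by rw [Units.val_pow_eq_pow_val, h0, Units.val_one])
    obtain ⟨k, _, hord⟩ := (Nat.dvd_prime_pow hp.out).mp (orderOf_dvd_of_pow_eq_one hg)
    exact ⟨k, hord⟩

/-- `p`-singular elements of the parabolic correspond to block triangular nilpotents. -/
noncomputable def equivST {p : ℕ} [hp : Fact p.Prime] [CharP Fq p] :
    {g : Matrix.GeneralLinearGroup (Fin n) Fq // g ∈ P n I ∧ ∃ k : ℕ, orderOf g = p ^ k} ≃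
      {M : Matrix (Fin n) (Fin n) Fq //
        M.BlockTriangular (wallCount n I) ∧ IsNilpotent M} where
  toFun g := ⟨(g.1 : Matrix (Fin n) (Fin n) Fq) - 1,
    ((mem_P_iff n I g.1).mp g.2.1).sub (Matrix.blockTriangular_one),
    (pSingular_iff n g.1).mp g.2.2⟩
  invFun M := ⟨(M.2.2.isUnit_one_add).unit, by
    constructor
    · rw [mem_P_iff]
      have hval : ((M.2.2.isUnit_one_add).unit : Matrix (Fin n) (Fin n) Fq) = 1 + M.1 :=
        IsUnit.unit_spec _
      rw [hval]
      exact Matrix.blockTriangular_one.add M.2.1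
    · rw [pSingular_iff]
      have hval : ((M.2.2.isUnit_one_add).unit : Matrix (Fin n) (Fin n) Fq) = 1 + M.1 :=
        IsUnit.unit_spec _
      rw [hval, add_sub_cancel_left]
      exact M.2.2⟩
  left_inv g := by
    refine Subtype.ext (Units.ext ?_)
    rw [IsUnit.unit_spec, add_sub_cancel]
  right_inv M := by
    refine Subtype.ext ?_
    show (((M.2.2.isUnit_one_add).unit : Matrix (Fin n) (Fin n) Fq)) - 1 = M.1
    rw [IsUnit.unit_spec, add_sub_cancel_left]

/-- the separated upper positions (free entries) -/
abbrev SepUpper :=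
  {ij : Fin n × Fin n // (ij.1 : ℕ) < (ij.2 : ℕ) ∧ wallCount n I ij.1 ≠ wallCount n I ij.2}

/-- strictly upper matrix from free entries -/
noncomputable def strictPart (u : SepUpper n I → Fq) : Matrix (Fin n) (Fin n) Fq :=
  fun i j => if h : (i : ℕ) < (j : ℕ) ∧ wallCount n I i ≠ wallCount n I j
    then u ⟨(i, j), h⟩ else 0

lemma strictPart_blockTriangular (u : SepUpper n I → Fq) :
    (strictPart n I u).BlockTriangular (wallCount n I) := by
  intro i j hlt
  apply dif_neg
  rintro ⟨h1, _⟩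
  exact absurd (wallCount_mono n I h1.le) (by omega)

lemma strictPart_isNilpotent (u : SepUpper n I → Fq) :
    IsNilpotent (strictPart n I u) := by
  have hbt : (strictPart n I u).BlockTriangular (fun i : Fin n => (i : ℕ)) := by
    intro i j hlt
    dsimp only at hlt
    apply dif_neg
    rintro ⟨h1, _⟩
    exact absurd h1 (by omega)
  rw [blockTriangular_isNilpotent_iff hbt]
  intro a _
  have hzero : (strictPart n I u).toSquareBlock (fun i : Fin n => (i : ℕ)) a = 0 := by
    ext i j
    have hij : (i : { x : Fin n // (x : ℕ) = a }) = j := by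
      apply Subtype.ext
      apply Fin.ext
      rw [i.2, j.2]
    rw [hij]
    show strictPart n I u j.1 j.1 = 0
    apply dif_neg
    rintro ⟨h1, _⟩
    omega
  rw [hzero]
  exact ⟨1, by rw [pow_one]⟩

/-- the unipotent radical is parametrized by the free entries -/
noncomputable def equivU :
    {g : Matrix.GeneralLinearGroup (Fin n) Fq // g ∈ U n I} ≃ (SepUpper n I → Fq) where
  toFun g s := (g.1 : Matrix (Fin n) (Fin n) Fq) s.1.1 s.1.2
  invFun u := ⟨((strictPart_isNilpotent n I u).isUnit_one_add).unit, by
    have hval : (((strictPart_isNilpotent n I u).isUnit_one_add).unit :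
        Matrix (Fin n) (Fin n) Fq) = 1 + strictPart n I u := IsUnit.unit_spec _
    constructor
    · rw [mem_P_iff, hval]
      exact Matrix.blockTriangular_one.add (strictPart_blockTriangular n I u)
    · intro i j hsep
      rw [not_separated_iff] at hsep
      have hstr : strictPart n I u i j = 0 := by
        apply dif_neg
        rintro ⟨_, h2⟩
        exact h2 hsep
      rw [hval]
      show (1 : Matrix (Fin n) (Fin n) Fq) i j + strictPart n I u i j = _
      rw [hstr, add_zero, Matrix.one_apply]⟩
  left_inv g := by
    refine Subtype.ext (Units.ext ?_)
    rw [IsUnit.unit_spec]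
    ext i j
    show (1 : Matrix (Fin n) (Fin n) Fq) i j + strictPart n I _ i j
        = (g.1 : Matrix (Fin n) (Fin n) Fq) i j
    by_cases h : (i : ℕ) < (j : ℕ) ∧ wallCount n I i ≠ wallCount n I j
    · rw [Matrix.one_apply_ne (by intro hc; rw [hc] at h; omega)]
      rw [zero_add]
      show strictPart n I _ i j = _
      rw [strictPart, dif_pos h]
    · have hstr : strictPart n I (fun s => (g.1 : Matrix (Fin n) (Fin n) Fq) s.1.1 s.1.2) i j
          = 0 := dif_neg h
      rw [hstr, add_zero, Matrix.one_apply]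
      by_cases hcc : wallCount n I i = wallCount n I j
      · exact (g.2.2 i j ((not_separated_iff n I i j).mpr hcc)).symm
      · have hij : i ≠ j := fun hc => hcc (congrArg _ hc)
        rw [if_neg hij]
        have hji : (j : ℕ) < (i : ℕ) := by
          rcases lt_trichotomy (i : ℕ) (j : ℕ) with h1 | h1 | h1
          · exact absurd ⟨h1, hcc⟩ h
          · exact absurd (Fin.ext h1) hij
          · exact h1
        exact (g.2.1 i j hji ((separated_iff n I i j).mpr hcc)).symm
  right_inv u := by
    funext s
    show (((strictPart_isNilpotent n I u).isUnit_one_add).unit :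
        Matrix (Fin n) (Fin n) Fq) s.1.1 s.1.2 = u s
    rw [IsUnit.unit_spec]
    show (1 : Matrix (Fin n) (Fin n) Fq) s.1.1 s.1.2 + strictPart n I u s.1.1 s.1.2 = u s
    rw [Matrix.one_apply_ne (by have := s.2.1; intro hc; rw [hc] at this; omega), zero_add]
    show strictPart n I u s.1.1 s.1.2 = u s
    rw [strictPart, dif_pos s.2]

end SteinbergAux

namespace SteinbergAux

open ParabolicGL

variable (n : ℕ) (I : Finset (Fin (n - 1)))
variable {Fq : Type*} [Field Fq]

/-- reassemble a block triangular matrix from free entries and diagonal blocks -/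
noncomputable def blockAssemble (u : SepUpper n I → Fq)
    (D : ∀ b : (Finset.image (wallCount n I) Finset.univ),
      Matrix {i : Fin n // wallCount n I i = (b : ℕ)}
        {i : Fin n // wallCount n I i = (b : ℕ)} Fq) :
    Matrix (Fin n) (Fin n) Fq :=
  fun i j =>
    if h : wallCount n I i = wallCount n I j then
      D ⟨wallCount n I i, Finset.mem_image_of_mem _ (Finset.mem_univ i)⟩ ⟨i, rfl⟩ ⟨j, h.symm⟩
    else if h2 : (i : ℕ) < (j : ℕ) then u ⟨(i, j), h2, h⟩ else 0

lemma blockAssemble_bt (u : SepUpper n I → Fq) (D : ∀ _, _) :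
    (blockAssemble n I u D).BlockTriangular (wallCount n I) := by
  intro i j hlt
  show (if h : wallCount n I i = wallCount n I j then _ else
    if h2 : (i : ℕ) < (j : ℕ) then _ else (0 : Fq)) = 0
  rw [dif_neg hlt.ne']
  apply dif_neg
  intro h2
  exact absurd (wallCount_mono n I h2.le) (by omega)

lemma blockAssemble_block (u : SepUpper n I → Fq) (D : ∀ _, _) (a : ℕ)
    (ha : a ∈ Finset.image (wallCount n I) Finset.univ) :
    (blockAssemble n I u D).toSquareBlock (wallCount n I) a = D ⟨a, ha⟩ := by
  ext ⟨i, hi⟩ ⟨j, hj⟩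
  subst hi
  show (if h : wallCount n I i = wallCount n I j then _ else
    if h2 : (i : ℕ) < (j : ℕ) then _ else (0 : Fq)) = _
  rw [dif_pos hj.symm]

/-- block triangular nilpotents decompose into free entries and nilpotent blocks -/
noncomputable def equivT :
    {M : Matrix (Fin n) (Fin n) Fq //
        M.BlockTriangular (wallCount n I) ∧ IsNilpotent M} ≃
      ((SepUpper n I → Fq) ×
        (∀ b : (Finset.image (wallCount n I) Finset.univ),
          {N : Matrix {i : Fin n // wallCount n I i = (b : ℕ)}
              {i : Fin n // wallCount n I i = (b : ℕ)} Fq // IsNilpotent N})) where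
  toFun M :=
    (fun s => M.1 s.1.1 s.1.2,
      fun b => ⟨M.1.toSquareBlock (wallCount n I) (b : ℕ),
        ((blockTriangular_isNilpotent_iff M.2.1).mp M.2.2) (b : ℕ) b.2⟩)
  invFun x :=
    ⟨blockAssemble n I x.1 (fun b => (x.2 b).1),
      blockAssemble_bt n I x.1 _,
      by
        rw [blockTriangular_isNilpotent_iff (blockAssemble_bt n I x.1 _)]
        intro a ha
        rw [blockAssemble_block n I x.1 _ a ha]
        exact (x.2 ⟨a, ha⟩).2⟩
  left_inv M := by
    refine Subtype.ext (Matrix.ext fun i j => ?_)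
    show (if h : wallCount n I i = wallCount n I j then _ else
      if h2 : (i : ℕ) < (j : ℕ) then _ else (0 : Fq)) = M.1 i j
    by_cases h : wallCount n I i = wallCount n I j
    · rw [dif_pos h]
      rfl
    · rw [dif_neg h]
      by_cases h2 : (i : ℕ) < (j : ℕ)
      · rw [dif_pos h2]
      · rw [dif_neg h2]
        have hji : wallCount n I j < wallCount n I i := by
          have hij : (j : ℕ) ≤ (i : ℕ) := by omega
          have := wallCount_mono n I hij
          omega
        exact (M.2.1 hji).symm
  right_inv x := by
    refine Prod.ext ?_ ?_
    · funext s
      show (if h : wallCount n I s.1.1 = wallCount n I s.1.2 then _ else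
        if h2 : ((s.1.1 : Fin n) : ℕ) < ((s.1.2 : Fin n) : ℕ) then _ else (0 : Fq)) = x.1 s
      rw [dif_neg s.2.2, dif_pos s.2.1]
    · funext b
      refine Subtype.ext ?_
      have := blockAssemble_block n I x.1 (fun b => (x.2 b).1) (b : ℕ) b.2
      exact this

end SteinbergAux

namespace SteinbergAux

open ParabolicGL

variable (n : ℕ) (I : Finset (Fin (n - 1)))

/-- The key counting identity: `n² = 2w + ∑ m_b²`. -/
lemma key_count :
    2 * Fintype.card (SepUpper n I) +
      ∑ b ∈ Finset.image (wallCount n I) Finset.univ,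
        Fintype.card {i : Fin n // wallCount n I i = b} *
          Fintype.card {i : Fin n // wallCount n I i = b} = n * n := by
  classical
  set c := wallCount n I with hc
  have hA : (Finset.univ.filter (fun p : Fin n × Fin n => c p.1 = c p.2)).card +
      (Finset.univ.filter (fun p : Fin n × Fin n => ¬ c p.1 = c p.2)).card =
      (Finset.univ : Finset (Fin n × Fin n)).card :=
    Finset.card_filter_add_card_filter_not _
  have hB : ((Finset.univ.filter (fun p : Fin n × Fin n => ¬ c p.1 = c p.2)).filter
        (fun p => (p.1 : ℕ) < (p.2 : ℕ))).card +
      ((Finset.univ.filter (fun p : Fin n × Fin n => ¬ c p.1 = c p.2)).filter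
        (fun p => ¬ (p.1 : ℕ) < (p.2 : ℕ))).card =
      (Finset.univ.filter (fun p : Fin n × Fin n => ¬ c p.1 = c p.2)).card :=
    Finset.card_filter_add_card_filter_not _
  -- identify the two halves of the non-equal part
  have hlt : ((Finset.univ.filter (fun p : Fin n × Fin n => ¬ c p.1 = c p.2)).filter
      (fun p => (p.1 : ℕ) < (p.2 : ℕ))).card = Fintype.card (SepUpper n I) := by
    rw [Fintype.card_subtype, Finset.filter_filter]
    congr 1
    apply Finset.filter_congr
    intro p _
    constructor
    · rintro ⟨h1, h2⟩; exact ⟨h2, h1⟩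
    · rintro ⟨h1, h2⟩; exact ⟨h2, h1⟩
  have hgt : ((Finset.univ.filter (fun p : Fin n × Fin n => ¬ c p.1 = c p.2)).filter
      (fun p => ¬ (p.1 : ℕ) < (p.2 : ℕ))).card =
      ((Finset.univ.filter (fun p : Fin n × Fin n => ¬ c p.1 = c p.2)).filter
      (fun p => (p.1 : ℕ) < (p.2 : ℕ))).card := by
    apply Finset.card_nbij' (i := fun p => (p.2, p.1)) (j := fun p => (p.2, p.1))
    · intro p hp
      simp only [Finset.mem_filter, Finset.mem_coe, Finset.mem_univ, true_and] at hp ⊢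
      have hne : (p.1 : ℕ) ≠ (p.2 : ℕ) := fun hc2 => hp.1 (congrArg c (Fin.ext hc2))
      exact ⟨fun h => hp.1 h.symm, by omega⟩
    · intro p hp
      simp only [Finset.mem_filter, Finset.mem_coe, Finset.mem_univ, true_and] at hp ⊢
      exact ⟨fun h => hp.1 h.symm, by omega⟩
    · intro p _; rfl
    · intro p _; rfl
  -- the equal part
  have heq : (Finset.univ.filter (fun p : Fin n × Fin n => c p.1 = c p.2)).card =
      ∑ b ∈ Finset.image c Finset.univ,
        Fintype.card {i : Fin n // c i = b} * Fintype.card {i : Fin n // c i = b} := by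
    rw [Finset.card_eq_sum_card_fiberwise
      (f := fun p : Fin n × Fin n => c p.1) (t := Finset.image c Finset.univ)
      (fun p _ => Finset.mem_image_of_mem _ (Finset.mem_univ p.1))]
    refine Finset.sum_congr rfl fun b _ => ?_
    have hprod : (Finset.univ.filter (fun p : Fin n × Fin n => c p.1 = c p.2)).filter
        (fun p => c p.1 = b) =
        (Finset.univ.filter fun i : Fin n => c i = b) ×ˢ
          (Finset.univ.filter fun i : Fin n => c i = b) := by
      ext p
      simp only [Finset.mem_filter, Finset.mem_univ, true_and, Finset.mem_product]
      constructor
      · rintro ⟨h1, h2⟩; exact ⟨h2, h2 ▸ h1.symm⟩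
      · rintro ⟨h1, h2⟩; exact ⟨h1.trans h2.symm, h1⟩
    rw [hprod, Finset.card_product, Fintype.card_subtype]
  have hcard : (Finset.univ : Finset (Fin n × Fin n)).card = n * n := by
    rw [Finset.card_univ, Fintype.card_prod, Fintype.card_fin]
  rw [← hcard, ← hA, ← hB, hlt, hgt, hlt, heq]
  ring

end SteinbergAux

namespace SteinbergAux

open ParabolicGL

theorem steinberg_general {Fq : Type*} [Field Fq] [Finite Fq] (p : ℕ) [Fact p.Prime]
    [CharP Fq p] (n : ℕ) (I : Finset (Fin (n - 1))) :
    Nat.card {g : Matrix.GeneralLinearGroup (Fin n) Fq //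
        g ∈ P n I ∧ ∃ k : ℕ, orderOf g = p ^ k} *
      Nat.card {g : Matrix.GeneralLinearGroup (Fin n) Fq // g ∈ U n I} =
      (Nat.card Fq) ^ (n * (n - 1)) := by
  classical
  have hq : 0 < Nat.card Fq := Nat.card_pos
  set q := Nat.card Fq with hqdef
  set w := Fintype.card (SepUpper n I) with hw
  set B := Finset.image (wallCount n I) Finset.univ with hB
  set m : ℕ → ℕ := fun b => Fintype.card {i : Fin n // wallCount n I i = b} with hm
  set t : ℕ → ℕ := fun b =>
    Nat.card {N : Matrix {i : Fin n // wallCount n I i = b}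
      {i : Fin n // wallCount n I i = b} Fq // IsNilpotent N} with ht
  have hU : Nat.card {g : Matrix.GeneralLinearGroup (Fin n) Fq // g ∈ U n I} = q ^ w := by
    rw [Nat.card_congr (equivU n I), Nat.card_fun,
      Nat.card_eq_fintype_card (α := SepUpper n I)]
  have hS : Nat.card {g : Matrix.GeneralLinearGroup (Fin n) Fq //
      g ∈ P n I ∧ ∃ k : ℕ, orderOf g = p ^ k} = q ^ w * ∏ b ∈ B, t b := by
    rw [Nat.card_congr ((equivST n I (p := p)).trans (equivT n I)), Nat.card_prod,
      Nat.card_fun, Nat.card_eq_fintype_card (α := SepUpper n I), Nat.card_pi]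
    congr 1
    exact Finset.prod_coe_sort B t
  have hblock : ∀ b : ℕ, t b * q ^ m b = q ^ (m b * m b) := fun b =>
    card_nilpotent_matrix (ι := {i : Fin n // wallCount n I i = b})
  have hsum : ∑ b ∈ B, m b = n := by
    rw [hB, hm]
    rw [sum_card_fibers (wallCount n I)]
    exact Fintype.card_fin n
  have hkey : 2 * w + ∑ b ∈ B, m b * m b = n * n := key_count n I
  have hqn : q ^ n = ∏ b ∈ B, q ^ m b := by
    rw [Finset.prod_pow_eq_pow_sum, hsum]
  have hmain : (q ^ w * ∏ b ∈ B, t b) * q ^ w * q ^ n = q ^ (n * n) := by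
    calc (q ^ w * ∏ b ∈ B, t b) * q ^ w * q ^ n
        = q ^ w * q ^ w * ((∏ b ∈ B, t b) * ∏ b ∈ B, q ^ m b) := by rw [hqn]; ring
      _ = q ^ w * q ^ w * ∏ b ∈ B, (t b * q ^ m b) := by rw [Finset.prod_mul_distrib]
      _ = q ^ w * q ^ w * ∏ b ∈ B, q ^ (m b * m b) := by
          rw [Finset.prod_congr rfl fun b _ => hblock b]
      _ = q ^ (2 * w + ∑ b ∈ B, m b * m b) := by
          rw [Finset.prod_pow_eq_pow_sum, ← pow_add, ← pow_add]
          congr 1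
          ring
      _ = q ^ (n * n) := by rw [hkey]
  have hnn : n * (n - 1) + n = n * n := by
    cases n with
    | zero => rfl
    | succ k => simp [Nat.succ_sub_one]; ring
  apply Nat.eq_of_mul_eq_mul_right (pow_pos hq n)
  rw [hS, hU, hmain, ← pow_add, hnn]

end SteinbergAux


open ParabolicGL

/-- **Generalized Steinberg theorem for `GL(n, F_q)`**, `q = p^e`: for any standard
parabolic subgroup `P_I` of `K = GL(n, F_q)`, the number of `p`-singular elements of
`P_I` times the order of its unipotent radical `O_p(P_I) = U_I` equals
`|K|_p² = q^(n(n-1))`. -/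
theorem generalized_steinberg_GL (p e n : ℕ) [Fact p.Prime] (he : 0 < e)
    (I : Finset (Fin (n - 1))) :
    Nat.card {g : Matrix.GeneralLinearGroup (Fin n) (GaloisField p e) |
        g ∈ P n I ∧ ∃ k : ℕ, orderOf g = p ^ k} *
      Nat.card (U n I (F := GaloisField p e)) =
      (p ^ e) ^ (n * (n - 1)) := by
  have h := SteinbergAux.steinberg_general (Fq := GaloisField p e) p n I
  rwa [GaloisField.card p e he.ne'] at h
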